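/- Let ψ be the morphism on words over {0,1,2} given by ψ(0) = 10, ψ(1) = 11, ψ(2) = 12, where {0,1,2} carries its natural linear order. If a word w over {0,1,2} is square-free (contains no nonempty fragment of the form uu), then ψ(w) contains no order-preserving square of length greater than 2; i.e., for every fragment uv of ψ(w) with |u| = |v| = k ≥ 2, the words u and v are not order-preserving-equivalent. -/

import Mathlib

/-- Over a linearly ordered alphabet, words `u` and `v` are order-preserving-equivalent if
`|u| = |v|` and there is a strictly increasing bijection `f : Alph(u) → Alph(v)` with
`v[i] = f(u[i])` for all `i`; equivalently, `v = u.map f` for some function `f` strictly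
increasing on the set of letters of `u`. -/
def OpEquiv {α : Type*} [LinearOrder α] (u v : List α) : Prop :=
  ∃ f : α → α, StrictMonoOn f {a | a ∈ u} ∧ v = u.map f

/-- The morphism `ψ : 0 ↦ 10, 1 ↦ 11, 2 ↦ 12` on the ordered ternary alphabet `{0,1,2}`. -/
def psi (a : Fin 3) : List (Fin 3) := [1, a]

lemma psi_len (w : List (Fin 3)) : (w.flatMap psi).length = 2 * w.length := by
  induction w with
  | nil => simp
  | cons a t ih => simp [psi, List.flatMap_cons, ih]; omega

lemma psi_getD_even (w : List (Fin 3)) (j : ℕ) (hj : j < w.length) :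
    (w.flatMap psi).getD (2 * j) 0 = 1 := by
  induction w generalizing j with
  | nil => simp at hj
  | cons a t ih =>
    cases j with
    | zero => simp [psi, List.flatMap_cons]
    | succ j =>
      have h2 : 2 * (j + 1) = (2 * j) + 1 + 1 := by ring
      rw [h2]
      simpa [psi, List.flatMap_cons] using ih j (by simpa using hj)

lemma psi_getD_odd (w : List (Fin 3)) (j : ℕ) (hj : j < w.length) :
    (w.flatMap psi).getD (2 * j + 1) 0 = w.getD j 0 := by
  induction w generalizing j with
  | nil => simp at hj
  | cons a t ih =>
    cases j with
    | zero => simp [psi, List.flatMap_cons]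
    | succ j =>
      have h2 : 2 * (j + 1) + 1 = (2 * j + 1) + 1 + 1 := by ring
      rw [h2]
      simpa [psi, List.flatMap_cons] using ih j (by simpa using hj)

lemma getD_mid {α : Type*} (x z : List α) (i : ℕ) (d : α) :
    (x ++ z).getD (x.length + i) d = z.getD i d := by
  rw [List.getD_append_right x z d _ (by omega)]
  simp

lemma exists_square (w : List (Fin 3)) (q m : ℕ) (hm : 0 < m)
    (hb : q + 2 * m ≤ w.length)
    (h : ∀ t < m, w.getD (q + t) 0 = w.getD (q + m + t) 0) :
    ∃ x u y : List (Fin 3), w = x ++ u ++ u ++ y ∧ u ≠ [] := by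
  refine ⟨w.take q, (w.drop q).take m, w.drop (q + 2 * m), ?_, ?_⟩
  · have hu2 : (w.drop q).take m = (w.drop (q + m)).take m := by
      apply List.ext_getElem
      · simp; omega
      · intro n h1 h2
        have hn : n < m := by simp at h1; omega
        simp only [List.getElem_take, List.getElem_drop]
        have h3 := h n hn
        rw [List.getD_eq_getElem w 0 (show q + n < w.length by omega),
            List.getD_eq_getElem w 0 (show q + m + n < w.length by omega)] at h3
        exact h3
    have key : w = w.take q ++ ((w.drop q).take m ++ ((w.drop (q + m)).take m ++ w.drop (q + 2 * m))) := by
      conv_lhs => rw [← List.take_append_drop q w]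
      congr 1
      conv_lhs => rw [← List.take_append_drop m (w.drop q)]
      rw [List.drop_drop]
      congr 1
      conv_lhs => rw [← List.take_append_drop m (w.drop (q + m))]
      rw [List.drop_drop]
      congr 2
      omega
    refine key.trans ?_
    rw [hu2]
    simp [List.append_assoc]
  · have : ((w.drop q).take m).length = m := by simp; omega
    intro hc
    rw [hc] at this
    simp at this
    omega

lemma fid_lemma (f : Fin 3 → Fin 3) (u : List (Fin 3))
    (hmono : StrictMonoOn f {a | a ∈ u}) (h1mem : (1 : Fin 3) ∈ u) (hf1 : f 1 = 1) :
    ∀ a ∈ u, f a = a := by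
  intro a ha
  have h3 : a = 0 ∨ a = 1 ∨ a = 2 := by
    have hlt := a.isLt
    simp only [Fin.ext_iff]
    rw [show ((0 : Fin 3)).val = 0 from rfl, show ((1 : Fin 3)).val = 1 from rfl,
      show ((2 : Fin 3)).val = 2 from rfl]
    omega
  rcases h3 with rfl | rfl | rfl
  · have hlt := hmono ha h1mem (show (0 : Fin 3) < 1 by decide)
    rw [hf1] at hlt
    have h4 : (f 0).val < (1 : Fin 3).val := hlt
    have h5 : ((1 : Fin 3)).val = 1 := rfl
    have h6 : ((0 : Fin 3)).val = 0 := rfl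
    exact Fin.ext (by omega)
  · exact hf1
  · have hlt := hmono h1mem ha (show (1 : Fin 3) < 2 by decide)
    rw [hf1] at hlt
    have h4 : (1 : Fin 3).val < (f 2).val := hlt
    have h5 : ((1 : Fin 3)).val = 1 := rfl
    have h6 : ((2 : Fin 3)).val = 2 := rfl
    have h7 := (f 2).isLt
    exact Fin.ext (by omega)

/-- If a word `w` over the ordered ternary alphabet `{0,1,2}` is square-free, then `ψ(w)`
contains no order-preserving square of length greater than 2: for every fragment `u ++ v`
of `ψ(w)` with `|u| = |v| = k ≥ 2`, the words `u` and `v` are not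
order-preserving-equivalent. -/
theorem psi_of_square_free_is_op_square_free (w : List (Fin 3))
    (hsf : ∀ x u y : List (Fin 3), w = x ++ u ++ u ++ y → u = []) :
    ∀ x u v y : List (Fin 3), w.flatMap psi = x ++ u ++ v ++ y →
      u.length = v.length → 2 ≤ u.length → ¬OpEquiv u v := by
  intro x u v y hL hk hk2 hop
  obtain ⟨f, hmono, hmap⟩ := hop
  set L := w.flatMap psi with hLdef
  set p := x.length with hp
  set k := u.length with hkdef
  set W := w.length with hW
  have hLlen : L.length = 2 * W := psi_len w
  have hlen : p + k + k + y.length = 2 * W := by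
    have := congrArg List.length hL
    simp [hLlen] at this
    omega
  -- pointwise values of u and v inside L
  have hu : ∀ i < k, u.getD i 0 = L.getD (p + i) 0 := by
    intro i hi
    have h1 : L = x ++ (u ++ (v ++ y)) := by simpa [List.append_assoc] using hL
    have h3 := getD_mid x (u ++ (v ++ y)) i 0
    rw [← hp] at h3
    rw [h1, h3, List.getD_append _ _ _ _ (by omega)]
  have hv : ∀ i < k, v.getD i 0 = L.getD (p + k + i) 0 := by
    intro i hi
    have h1 : L = (x ++ u) ++ (v ++ (y : List (Fin 3))) := by
      simpa [List.append_assoc] using hL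
    have h2 : (x ++ u).length = p + k := by simp [hp, hkdef]
    have h3 := getD_mid (x ++ u) (v ++ y) i 0
    rw [h2] at h3
    rw [h1, h3, List.getD_append _ _ _ _ (by omega)]
  have hf : ∀ i < k, v.getD i 0 = f (u.getD i 0) := by
    intro i hi
    rw [hmap, List.getD_eq_getElem _ _ (by simp; omega),
      List.getD_eq_getElem _ _ (by omega), List.getElem_map]
  have hmem : ∀ i < k, u.getD i 0 ∈ u := fun i hi => by
    rw [List.getD_eq_getElem _ _ (by omega)]; exact List.getElem_mem _
  -- evaluation of L
  have hE : ∀ j < W, L.getD (2 * j) 0 = 1 := fun j hj => psi_getD_even w j hj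
  have hO : ∀ j < W, L.getD (2 * j + 1) 0 = w.getD j 0 := fun j hj => psi_getD_odd w j hj
  -- main case analysis on parities of p and k
  rcases Nat.even_or_odd p with ⟨q, hq⟩ | ⟨q, hq⟩ <;>
    rcases Nat.even_or_odd k with ⟨m, hm⟩ | ⟨m, hm⟩
  · -- p = 2q, k = 2m (even, even)
    have hm1 : 1 ≤ m := by omega
    have hf1 : f 1 = 1 := by
      have h1 : u.getD 0 0 = 1 := by
        rw [hu 0 (by omega)]
        rw [show p + 0 = 2 * q by omega]
        exact hE q (by omega)
      have h2 : v.getD 0 0 = 1 := by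
        rw [hv 0 (by omega)]
        rw [show p + k + 0 = 2 * (q + m) by omega]
        exact hE (q + m) (by omega)
      have := hf 0 (by omega)
      rw [h1, h2] at this
      exact this.symm
    have h1mem : (1 : Fin 3) ∈ u := by
      have h1 : u.getD 0 0 = 1 := by
        rw [hu 0 (by omega)]
        rw [show p + 0 = 2 * q by omega]
        exact hE q (by omega)
      rw [← h1]; exact hmem 0 (by omega)
    have fid : ∀ a ∈ u, f a = a := fid_lemma f u hmono h1mem hf1
    have hsq : ∀ t < m, w.getD (q + t) 0 = w.getD (q + m + t) 0 := by
      intro t ht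
      have hut : u.getD (2 * t + 1) 0 = w.getD (q + t) 0 := by
        rw [hu _ (by omega), show p + (2 * t + 1) = 2 * (q + t) + 1 by omega]
        exact hO (q + t) (by omega)
      have hvt : v.getD (2 * t + 1) 0 = w.getD (q + m + t) 0 := by
        rw [hv _ (by omega), show p + k + (2 * t + 1) = 2 * (q + m + t) + 1 by omega]
        exact hO (q + m + t) (by omega)
      have := hf (2 * t + 1) (by omega)
      rw [hvt, hut, fid _ (by rw [← hut]; exact hmem _ (by omega))] at this
      exact this.symm
    obtain ⟨x', u', y', heq, hne⟩ := exists_square w q m hm1 (by omega) hsq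
    exact hne (hsf x' u' y' heq)
  · -- p = 2q, k = 2m + 1 (even, odd)
    have hm1 : 1 ≤ m := by omega
    have hf1a : w.getD (q + m) 0 = f 1 := by
      have hut : u.getD 0 0 = 1 := by
        rw [hu 0 (by omega), show p + 0 = 2 * q by omega]
        exact hE q (by omega)
      have hvt : v.getD 0 0 = w.getD (q + m) 0 := by
        rw [hv 0 (by omega), show p + k + 0 = 2 * (q + m) + 1 by omega]
        exact hO (q + m) (by omega)
      have := hf 0 (by omega)
      rw [hvt, hut] at this
      exact this
    have hf1b : w.getD (q + m + 1) 0 = f 1 := by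
      have hut : u.getD 2 0 = 1 := by
        rw [hu 2 (by omega), show p + 2 = 2 * (q + 1) by omega]
        exact hE (q + 1) (by omega)
      have hvt : v.getD 2 0 = w.getD (q + m + 1) 0 := by
        rw [hv 2 (by omega), show p + k + 2 = 2 * (q + m + 1) + 1 by omega]
        exact hO (q + m + 1) (by omega)
      have := hf 2 (by omega)
      rw [hvt, hut] at this
      exact this
    have hsq : ∀ t < 1, w.getD (q + m + t) 0 = w.getD (q + m + 1 + t) 0 := by
      intro t ht
      have : t = 0 := by omega
      subst this
      simp only [Nat.add_zero]
      rw [hf1a, hf1b]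
    obtain ⟨x', u', y', heq, hne⟩ := exists_square w (q + m) 1 (by omega) (by omega) hsq
    exact hne (hsf x' u' y' heq)
  · -- p = 2q + 1, k = 2m (odd, even)
    have hm1 : 1 ≤ m := by omega
    have hf1 : f 1 = 1 := by
      have h1 : u.getD 1 0 = 1 := by
        rw [hu 1 (by omega), show p + 1 = 2 * (q + 1) by omega]
        exact hE (q + 1) (by omega)
      have h2 : v.getD 1 0 = 1 := by
        rw [hv 1 (by omega), show p + k + 1 = 2 * (q + m + 1) by omega]
        exact hE (q + m + 1) (by omega)
      have := hf 1 (by omega)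
      rw [h1, h2] at this
      exact this.symm
    have h1mem : (1 : Fin 3) ∈ u := by
      have h1 : u.getD 1 0 = 1 := by
        rw [hu 1 (by omega), show p + 1 = 2 * (q + 1) by omega]
        exact hE (q + 1) (by omega)
      rw [← h1]; exact hmem 1 (by omega)
    have fid : ∀ a ∈ u, f a = a := fid_lemma f u hmono h1mem hf1
    have hsq : ∀ t < m, w.getD (q + t) 0 = w.getD (q + m + t) 0 := by
      intro t ht
      have hut : u.getD (2 * t) 0 = w.getD (q + t) 0 := by
        rw [hu _ (by omega), show p + 2 * t = 2 * (q + t) + 1 by omega]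
        exact hO (q + t) (by omega)
      have hvt : v.getD (2 * t) 0 = w.getD (q + m + t) 0 := by
        rw [hv _ (by omega), show p + k + 2 * t = 2 * (q + m + t) + 1 by omega]
        exact hO (q + m + t) (by omega)
      have := hf (2 * t) (by omega)
      rw [hvt, hut, fid _ (by rw [← hut]; exact hmem _ (by omega))] at this
      exact this.symm
    obtain ⟨x', u', y', heq, hne⟩ := exists_square w q m hm1 (by omega) hsq
    exact hne (hsf x' u' y' heq)
  · -- p = 2q + 1, k = 2m + 1 (odd, odd)
    have hm1 : 1 ≤ m := by omega
    have ha : f (w.getD q 0) = 1 := by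
      have hut : u.getD 0 0 = w.getD q 0 := by
        rw [hu 0 (by omega), show p + 0 = 2 * q + 1 by omega]
        exact hO q (by omega)
      have hvt : v.getD 0 0 = 1 := by
        rw [hv 0 (by omega), show p + k + 0 = 2 * (q + m + 1) by omega]
        exact hE (q + m + 1) (by omega)
      have := hf 0 (by omega)
      rw [hvt, hut] at this
      exact this.symm
    have hb : f (w.getD (q + 1) 0) = 1 := by
      have hut : u.getD 2 0 = w.getD (q + 1) 0 := by
        rw [hu 2 (by omega), show p + 2 = 2 * (q + 1) + 1 by omega]
        exact hO (q + 1) (by omega)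
      have hvt : v.getD 2 0 = 1 := by
        rw [hv 2 (by omega), show p + k + 2 = 2 * (q + m + 2) by omega]
        exact hE (q + m + 2) (by omega)
      have := hf 2 (by omega)
      rw [hvt, hut] at this
      exact this.symm
    have hamem : w.getD q 0 ∈ u := by
      have hut : u.getD 0 0 = w.getD q 0 := by
        rw [hu 0 (by omega), show p + 0 = 2 * q + 1 by omega]
        exact hO q (by omega)
      rw [← hut]; exact hmem 0 (by omega)
    have hbmem : w.getD (q + 1) 0 ∈ u := by
      have hut : u.getD 2 0 = w.getD (q + 1) 0 := by
        rw [hu 2 (by omega), show p + 2 = 2 * (q + 1) + 1 by omega]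
        exact hO (q + 1) (by omega)
      rw [← hut]; exact hmem 2 (by omega)
    have heqab : w.getD q 0 = w.getD (q + 1) 0 :=
      hmono.injOn hamem hbmem (by rw [ha, hb])
    have hsq : ∀ t < 1, w.getD (q + t) 0 = w.getD (q + 1 + t) 0 := by
      intro t ht
      have : t = 0 := by omega
      subst this
      simpa using heqab
    obtain ⟨x', u', y', heq, hne⟩ := exists_square w q 1 (by omega) (by omega) hsq
    exact hne (hsf x' u' y' heq)
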